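/- Let T be an ω-Calderón–Zygmund operator with kernel size constant C_K and modulus of continuity ω satisfying the Dini condition. Define the grand maximal truncated operator M_T f(x) = sup over cubes Q ∋ x of ess sup_{ξ∈Q} |T(f·χ_{ℝⁿ∖3Q})(ξ)|, and the maximal truncated operator T*f(x) = sup_{ε>0} |∫_{|y−x|>ε} K(x,y) f(y) dy|. Then for all x ∈ ℝⁿ, M_T f(x) ≤ c_n (‖ω‖_Dini + C_K) Mf(x) + T*f(x), where M is the Hardy–Littlewood maximal operator. -/

import Mathlib

noncomputable section
open MeasureTheory ENNReal Set

structure Cube (n : ℕ) where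
  corner : Fin n → ℝ
  side : ℝ
  side_pos : 0 < side

def Cube.set {n : ℕ} (Q : Cube n) : Set (Fin n → ℝ) :=
  {x | ∀ i, Q.corner i ≤ x i ∧ x i < Q.corner i + Q.side}

def Cube.triple {n : ℕ} (Q : Cube n) : Cube n :=
  ⟨fun i => Q.corner i - Q.side, 3 * Q.side, by linarith [Q.side_pos]⟩

/-- The Hardy–Littlewood maximal operator, `ℝ≥0∞`-valued. -/
def maximalFunction {n : ℕ} (f : (Fin n → ℝ) → ℂ) (x : Fin n → ℝ) : ℝ≥0∞ :=
  ⨆ r ∈ Ioi (0 : ℝ), (volume (Metric.ball x r))⁻¹ * ∫⁻ y in Metric.ball x r, ‖f y‖₊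

/-- The grand maximal truncated operator
`M_T f (x) = sup_{Q ∋ x} ess sup_{ξ ∈ Q} |T(f χ_{ℝⁿ∖3Q})(ξ)|`. -/
def grandMaximal {n : ℕ} (T : ((Fin n → ℝ) → ℂ) → (Fin n → ℝ) → ℂ)
    (f : (Fin n → ℝ) → ℂ) (x : Fin n → ℝ) : ℝ≥0∞ :=
  ⨆ Q : Cube n, ⨆ (_ : x ∈ Q.set),
    essSup (fun ξ => (‖T ((Q.triple.setᶜ).indicator f) ξ‖₊ : ℝ≥0∞))
      (volume.restrict Q.set)

/-- The maximal truncated singular integral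
`T⋆ f (x) = sup_{ε>0} |∫_{|y−x|>ε} K(x,y) f(y) dy|`. -/
def maximalTruncation {n : ℕ} (K : (Fin n → ℝ) → (Fin n → ℝ) → ℂ)
    (f : (Fin n → ℝ) → ℂ) (x : Fin n → ℝ) : ℝ≥0∞ :=
  ⨆ ε ∈ Ioi (0 : ℝ), (‖∫ y in {y | ε < dist y x}, K x y * f y‖₊ : ℝ≥0∞)

lemma cube_measurable {n : ℕ} (Q : Cube n) : MeasurableSet Q.set := by
  have : Q.set = Set.pi Set.univ (fun i => Set.Ico (Q.corner i) (Q.corner i + Q.side)) := by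
    ext y; simp [Cube.set, Set.mem_pi, Set.mem_Ico]
  rw [this]
  exact MeasurableSet.univ_pi fun i => measurableSet_Ico

lemma exists_annulus {s d : ℝ} (hs : 0 < s) (hd : 2*s < d) :
    ∃ k : ℕ, 2^(k+1)*s < d ∧ d ≤ 2^(k+2)*s := by
  have hP : ∃ m : ℕ, d ≤ 2^(m+2)*s := by
    obtain ⟨m, hm⟩ := pow_unbounded_of_one_lt (d/s) (one_lt_two (α := ℝ))
    refine ⟨m, ?_⟩
    have h1 : d / s < 2^(m+2) := lt_of_lt_of_le hm (by
      have : (2:ℝ)^m ≤ 2^(m+2) := pow_le_pow_right₀ one_le_two (by omega)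
      linarith)
    have := (div_lt_iff₀ hs).1 h1
    linarith
  classical
  refine ⟨Nat.find hP, ?_, Nat.find_spec hP⟩
  rcases Nat.eq_zero_or_pos (Nat.find hP) with h0 | hpos
  · rw [h0]; norm_num; linarith
  · obtain ⟨j, hj⟩ := Nat.exists_eq_succ_of_ne_zero hpos.ne'
    have hmin := Nat.find_min hP (m := j) (by omega)
    push_neg at hmin
    rw [hj]
    calc 2^(j+1+1)*s = 2^(j+2)*s := by ring_nf
    _ < d := hmin

lemma dini_sum (ω : ℝ → ℝ) (hmono : MonotoneOn ω (Icc 0 1))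
    (hnn : ∀ t ∈ Icc (0:ℝ) 1, 0 ≤ ω t)
    (hint : IntegrableOn (fun t => ω t / t) (Ioc (0:ℝ) 1)) (N : ℕ) :
    Real.log 2 * ∑ k ∈ Finset.range N, ω ((1/2:ℝ)^(k+1)) ≤ ∫ t in Ioc (0:ℝ) 1, ω t / t := by
  have hp : ∀ k : ℕ, (0:ℝ) < (1/2:ℝ)^k := fun k => by positivity
  have hp1 : ∀ k : ℕ, ((1/2:ℝ))^k ≤ 1 := fun k => pow_le_one₀ (by norm_num) (by norm_num)
  have hple : ∀ k : ℕ, ((1/2:ℝ))^(k+1) ≤ (1/2:ℝ)^k := fun k =>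
    pow_le_pow_of_le_one (by norm_num) (by norm_num) (by omega)
  have step : ∀ k : ℕ, Real.log 2 * ω ((1/2:ℝ)^(k+1)) ≤
      ∫ t in Ioc ((1/2:ℝ)^(k+1)) ((1/2:ℝ)^k), ω t / t := by
    intro k
    set a := ((1/2:ℝ))^(k+1) with ha
    set b := ((1/2:ℝ))^k with hb
    have hab : a ≤ b := hple k
    have ha0 : 0 < a := hp _
    have hb0 : 0 < b := hp _
    have hIinv : IntegrableOn (fun t : ℝ => ω a * t⁻¹) (Ioc a b) := by
      refine (((continuousOn_id.inv₀ ?_).const_smul (ω a)).integrableOn_Icc).mono_set Ioc_subset_Icc_self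
      intro t ht
      exact ne_of_gt (lt_of_lt_of_le ha0 ht.1)
    have hIω : IntegrableOn (fun t => ω t / t) (Ioc a b) :=
      hint.mono_set (Ioc_subset_Ioc ha0.le (hp1 k))
    have hmain : ∫ t in Ioc a b, ω a * t⁻¹ ≤ ∫ t in Ioc a b, ω t / t := by
      refine setIntegral_mono_on hIinv hIω measurableSet_Ioc ?_
      intro t ht
      have ht0 : 0 < t := lt_of_lt_of_le ha0 ht.1.le
      rw [div_eq_mul_inv]
      exact mul_le_mul_of_nonneg_right
        (hmono ⟨ha0.le, le_trans hab (hp1 k)⟩ ⟨ht0.le, le_trans ht.2 (hp1 k)⟩ ht.1.le)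
        (inv_nonneg.2 ht0.le)
    have hcalc : ∫ t in Ioc a b, ω a * t⁻¹ = ω a * Real.log 2 := by
      rw [integral_const_mul]
      have : ∫ t in Ioc a b, t⁻¹ = ∫ t in a..b, t⁻¹ := (intervalIntegral.integral_of_le hab).symm
      rw [this, integral_inv_of_pos ha0 hb0]
      congr 1
      rw [hb, ha, pow_succ]
      field_simp
    calc Real.log 2 * ω a = ω a * Real.log 2 := by ring
    _ = ∫ t in Ioc a b, ω a * t⁻¹ := hcalc.symm
    _ ≤ _ := hmain
  have tele : ∀ N : ℕ, ∑ k ∈ Finset.range N, (∫ t in Ioc ((1/2:ℝ)^(k+1)) ((1/2:ℝ)^k), ω t / t)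
      = ∫ t in Ioc ((1/2:ℝ)^N) 1, ω t / t := by
    intro N
    induction N with
    | zero => simp
    | succ N ih =>
      rw [Finset.sum_range_succ, ih]
      have hdisj : Disjoint (Ioc ((1/2:ℝ)^(N+1)) ((1/2:ℝ)^N)) (Ioc ((1/2:ℝ)^N) 1) :=
        Set.Ioc_disjoint_Ioc_of_le le_rfl
      have hunion := Set.Ioc_union_Ioc_eq_Ioc (hple N) (hp1 N)
      rw [← hunion, setIntegral_union hdisj measurableSet_Ioc
        (hint.mono_set (Ioc_subset_Ioc (hp _).le (hp1 _)))
        (hint.mono_set (Ioc_subset_Ioc (hp _).le le_rfl))]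
      ring
  calc Real.log 2 * ∑ k ∈ Finset.range N, ω ((1/2:ℝ)^(k+1))
      = ∑ k ∈ Finset.range N, Real.log 2 * ω ((1/2:ℝ)^(k+1)) := Finset.mul_sum _ _ _
  _ ≤ ∑ k ∈ Finset.range N, (∫ t in Ioc ((1/2:ℝ)^(k+1)) ((1/2:ℝ)^k), ω t / t) :=
      Finset.sum_le_sum fun k _ => step k
  _ = ∫ t in Ioc ((1/2:ℝ)^N) 1, ω t / t := tele N
  _ ≤ ∫ t in Ioc (0:ℝ) 1, ω t / t := by
      refine setIntegral_mono_set hint ?_ (HasSubset.Subset.eventuallyLE (Ioc_subset_Ioc (hp N).le le_rfl))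
      filter_upwards [ae_restrict_mem measurableSet_Ioc] with t ht
      exact div_nonneg (hnn t ⟨ht.1.le, ht.2⟩) ht.1.le

lemma K_contOn {n : ℕ} (ω : ℝ → ℝ) (hmono : MonotoneOn ω (Icc 0 1))
    (K : (Fin n → ℝ) → (Fin n → ℝ) → ℂ)
    (hsm : ∀ x x' y : Fin n → ℝ, 2 * dist x x' < dist x y →
      ‖K x y - K x' y‖ + ‖K y x - K y x'‖ ≤ ω (dist x x' / dist x y) / dist x y ^ n)
    (hsmall : ∀ η : ℝ, 0 < η → ∃ u : ℝ, 0 < u ∧ u ≤ 1 ∧ ω u < η)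
    (z : (Fin n → ℝ)) : ContinuousOn (fun y => K z y) {y | y ≠ z} := by
  intro y₀ hy₀
  apply ContinuousAt.continuousWithinAt
  rw [Metric.continuousAt_iff]
  intro ε hε
  have hd : 0 < dist y₀ z := dist_pos.2 hy₀
  set d := dist y₀ z with hdd
  have hdn : 0 < d ^ n := pow_pos hd n
  obtain ⟨u, hu0, hu1, hωu⟩ := hsmall (ε * d ^ n) (by positivity)
  refine ⟨min (u * d) (d / 2), by positivity, ?_⟩
  intro y hy
  have hyd : dist y₀ y < d / 2 := by
    rw [dist_comm]; exact lt_of_lt_of_le hy (min_le_right _ _)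
  have h2 : 2 * dist y₀ y < dist y₀ z := by rw [← hdd]; linarith
  have hb := hsm y₀ y z h2
  have harg0 : 0 ≤ dist y₀ y / d := div_nonneg dist_nonneg hd.le
  have hargu : dist y₀ y / d ≤ u := by
    rw [div_le_iff₀ hd]
    have : dist y₀ y < u * d := by
      rw [dist_comm]; exact lt_of_lt_of_le hy (min_le_left _ _)
    linarith
  have hmono' : ω (dist y₀ y / d) ≤ ω u :=
    hmono ⟨harg0, le_trans hargu hu1⟩ ⟨hu0.le, hu1⟩ hargu
  have hnorm : ‖K z y - K z y₀‖ ≤ ω (dist y₀ y / d) / d ^ n := by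
    have h1 : ‖K z y₀ - K z y‖ ≤ ω (dist y₀ y / dist y₀ z) / dist y₀ z ^ n :=
      le_trans (le_add_of_nonneg_left (norm_nonneg _)) hb
    rw [norm_sub_rev] at h1
    exact h1
  rw [dist_eq_norm]
  calc ‖K z y - K z y₀‖ ≤ ω (dist y₀ y / d) / d ^ n := hnorm
  _ ≤ ω u / d ^ n := by gcongr
  _ < ε := by rw [div_lt_iff₀ hdn]; linarith

/-- for an `ω`-Calderón–Zygmund operator `T` with Dini modulus `ω` and size
constant `C_K`, the pointwise bound
`M_T f (x) ≤ c_n (‖ω‖_Dini + C_K) M f (x) + T⋆ f (x)` holds for all `x`. -/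
theorem grand_maximal_pointwise_bound (n : ℕ) :
    ∃ c : ℝ, 0 < c ∧
      ∀ (ω : ℝ → ℝ), MonotoneOn ω (Icc 0 1) → (∀ t ∈ Icc (0:ℝ) 1, 0 ≤ ω t) → ω 0 = 0 →
        (∀ s t : ℝ, 0 ≤ s → 0 ≤ t → s + t ≤ 1 → ω (s + t) ≤ ω s + ω t) →
        IntegrableOn (fun t => ω t / t) (Ioc (0:ℝ) 1) →
      ∀ (T : ((Fin n → ℝ) → ℂ) → (Fin n → ℝ) → ℂ)
        (K : (Fin n → ℝ) → (Fin n → ℝ) → ℂ) (CK : ℝ), 0 ≤ CK →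
        (∀ (f : (Fin n → ℝ) → ℂ), Integrable f → ∀ x, x ∉ tsupport f →
          T f x = ∫ y, K x y * f y) →
        (∀ x y : Fin n → ℝ, x ≠ y → ‖K x y‖ ≤ CK / dist x y ^ n) →
        (∀ x x' y : Fin n → ℝ, 2 * dist x x' < dist x y →
          ‖K x y - K x' y‖ + ‖K y x - K y x'‖ ≤
            ω (dist x x' / dist x y) / dist x y ^ n) →
      ∀ (f : (Fin n → ℝ) → ℂ), Integrable f →
      ∀ x : Fin n → ℝ,
        grandMaximal T f x ≤
          ENNReal.ofReal (c * ((∫ t in Ioc (0:ℝ) 1, ω t / t) + CK)) * maximalFunction f x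
            + maximalTruncation K f x := by
  refine ⟨2 * 8^n, by positivity, ?_⟩
  intro ω hmono hnn hω0 hsub hint T K CK hCK hrep hsize hsm f hf x
  set D : ℝ := ∫ t in Ioc (0:ℝ) 1, ω t / t with hD
  have hD0 : 0 ≤ D := setIntegral_nonneg measurableSet_Ioc
    (fun t ht => div_nonneg (hnn t ⟨ht.1.le, ht.2⟩) ht.1.le)
  have hωnn : ∀ k : ℕ, 0 ≤ ω ((1/2:ℝ)^(k+1)) :=
    fun k => hnn _ ⟨by positivity, pow_le_one₀ (by norm_num) (by norm_num)⟩
  have hsum : ∀ N : ℕ, ∑ k ∈ Finset.range N, ω ((1/2:ℝ)^(k+1)) ≤ 2 * D := by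
    intro N
    have h1 := dini_sum ω hmono hnn hint N
    have hlog : (1/2 : ℝ) ≤ Real.log 2 := by linarith [Real.log_two_gt_d9]
    nlinarith [Finset.sum_nonneg (fun k (_ : k ∈ Finset.range N) => hωnn k)]
  have hsummable : Summable (fun k : ℕ => ω ((1/2:ℝ)^(k+1))) :=
    summable_of_sum_range_le hωnn hsum
  have htsum : ∑' k : ℕ, ω ((1/2:ℝ)^(k+1)) ≤ 2 * D := hsummable.tsum_le_of_sum_range_le hsum
  have hsmall : ∀ η : ℝ, 0 < η → ∃ u, 0 < u ∧ u ≤ 1 ∧ ω u < η := by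
    intro η hη
    obtain ⟨k, hk⟩ := (hsummable.tendsto_atTop_zero.eventually_lt_const hη).exists
    exact ⟨(1/2)^(k+1), by positivity, pow_le_one₀ (by norm_num) (by norm_num), hk⟩
  have hKcont : ∀ z, ContinuousOn (fun y => K z y) {y | y ≠ z} :=
    K_contOn ω hmono K hsm hsmall
  set M := maximalFunction f x with hM
  have hMF : ∀ r : ℝ, 0 < r →
      ∫⁻ y in Metric.ball x r, (‖f y‖₊ : ℝ≥0∞) ≤ ENNReal.ofReal (2*r) ^ n * M := by
    intro r hr
    have hvol : volume (Metric.ball x r) = ENNReal.ofReal (2*r) ^ n := by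
      rw [volume_pi_ball x hr]
      simp [Real.volume_ball]
    have hle : (volume (Metric.ball x r))⁻¹ * ∫⁻ y in Metric.ball x r, (‖f y‖₊ : ℝ≥0∞) ≤ M := by
      rw [hM, maximalFunction]
      exact le_biSup
        (fun r => (volume (Metric.ball x r))⁻¹ * ∫⁻ y in Metric.ball x r, (‖f y‖₊ : ℝ≥0∞))
        (mem_Ioi.2 hr)
    have h0 : (ENNReal.ofReal (2*r)) ^ n ≠ 0 := pow_ne_zero _ (ENNReal.ofReal_pos.2 (by linarith)).ne'
    have htop : (ENNReal.ofReal (2*r)) ^ n ≠ ⊤ := pow_ne_top ofReal_ne_top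
    calc ∫⁻ y in Metric.ball x r, (‖f y‖₊ : ℝ≥0∞)
        = (ENNReal.ofReal (2*r) ^ n * (ENNReal.ofReal (2*r) ^ n)⁻¹) *
            ∫⁻ y in Metric.ball x r, (‖f y‖₊ : ℝ≥0∞) := by
          rw [ENNReal.mul_inv_cancel h0 htop, one_mul]
    _ = ENNReal.ofReal (2*r) ^ n * ((volume (Metric.ball x r))⁻¹ *
            ∫⁻ y in Metric.ball x r, (‖f y‖₊ : ℝ≥0∞)) := by rw [hvol, mul_assoc]
    _ ≤ ENNReal.ofReal (2*r) ^ n * M := mul_le_mul_right hle _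
  rw [grandMaximal]
  apply iSup_le
  intro Q
  apply iSup_le
  intro hxQ
  set s : ℝ := Q.side with hs
  have hs0 : 0 < s := Q.side_pos
  set g : (Fin n → ℝ) → ℂ := (Q.triple.setᶜ).indicator f with hg
  set U : Set (Fin n → ℝ) := {y | 2*s < dist y x} with hU
  have hUmeas : MeasurableSet U := by
    have : Continuous fun y : Fin n → ℝ => dist y x := continuous_id.dist continuous_const
    exact measurableSet_lt measurable_const this.measurable
  set g₁ : (Fin n → ℝ) → ℂ := U.indicator f with hg₁
  set g₂ : (Fin n → ℝ) → ℂ := (Uᶜ ∩ Q.triple.setᶜ).indicator f with hg₂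
  have hQ3meas : MeasurableSet Q.triple.set := cube_measurable _
  -- geometry
  have hdiam : ∀ ξ ∈ Q.set, ∀ ζ ∈ Q.set, dist ξ ζ ≤ s := by
    intro ξ hξ ζ hζ
    refine (dist_pi_le_iff hs0.le).2 fun i => ?_
    have h1 := hξ i; have h2 := hζ i
    rw [Real.dist_eq, abs_sub_le_iff]
    constructor <;> linarith [h1.1, h1.2, h2.1, h2.2]
  have hfar : ∀ ξ ∈ Q.set, ∀ y, y ∉ Q.triple.set → s ≤ dist ξ y := by
    intro ξ hξ y hy
    simp only [Cube.set, Cube.triple, mem_setOf_eq, not_forall] at hy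
    obtain ⟨i, hi⟩ := hy
    have h1 := hξ i
    have hcoord : s ≤ dist (ξ i) (y i) := by
      rw [Real.dist_eq]
      rcases lt_or_ge (y i) (Q.corner i - Q.side) with hlt | hge
      · have h2 : s ≤ ξ i - y i := by simp only [hs]; linarith [h1.1]
        exact le_trans h2 (le_abs_self _)
      · have hyB : Q.corner i - Q.side + 3 * Q.side ≤ y i := by
          by_contra hB
          push_neg at hB
          exact hi ⟨hge, hB⟩
        have h2 : s ≤ y i - ξ i := by simp only [hs]; linarith [h1.2]
        calc s ≤ y i - ξ i := h2
        _ ≤ |ξ i - y i| := by rw [abs_sub_comm]; exact le_abs_self _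
    exact le_trans hcoord (dist_le_pi_dist ξ y i)
  have h3Q : ∀ y ∈ Q.triple.set, dist y x ≤ 2*s := by
    intro y hy
    refine (dist_pi_le_iff (by linarith)).2 fun i => ?_
    have h1 := hy i; have h2 := hxQ i
    simp only [Cube.triple] at h1
    rw [Real.dist_eq, abs_sub_le_iff]
    constructor <;> linarith [h1.1, h1.2, h2.1, h2.2]
  have hQsub : Q.set ⊆ Q.triple.set := by
    intro ξ hξ i
    have := hξ i
    simp only [Cube.triple]
    constructor <;> [linarith [this.1]; linarith [this.2]]
  have hUnot3Q : ∀ y ∈ U, y ∉ Q.triple.set := by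
    intro y hy hy3
    have := h3Q y hy3
    rw [hU, mem_setOf_eq] at hy
    linarith
  have hgsplit : ∀ y, g y = g₁ y + g₂ y := by
    intro y
    by_cases hyU : y ∈ U
    · have hy3 : y ∉ Q.triple.set := hUnot3Q y hyU
      simp [hg, hg₁, hg₂, indicator_of_mem, hyU, hy3, indicator_of_notMem]
    · by_cases hy3 : y ∈ Q.triple.set
      · simp [hg, hg₁, hg₂, hyU, hy3]
      · simp [hg, hg₁, hg₂, hyU, hy3]
  refine essSup_le_of_ae_le _ (ae_restrict_of_forall_mem (cube_measurable Q) ?_)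
  intro ξ hξQ
  have hξ3i : ξ ∈ interior Q.triple.set := by
    rw [mem_interior]
    refine ⟨Set.pi Set.univ (fun i => Ioo (Q.corner i - Q.side) (Q.corner i + 2*Q.side)), ?_,
      isOpen_set_pi finite_univ (fun a _ => isOpen_Ioo), ?_⟩
    · intro y hy i
      have := hy i (mem_univ i)
      simp only [mem_Ioo] at this
      simp only [Cube.triple, Cube.set, mem_setOf_eq]
      constructor <;> linarith [this.1, this.2]
    · intro i _
      have := hξQ i
      simp only [mem_Ioo]
      constructor <;> linarith [this.1, this.2, hs0]
  have hξts : ξ ∉ tsupport g := by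
    intro hmem
    have h1 : tsupport g ⊆ (interior Q.triple.set)ᶜ := by
      rw [← closure_compl]
      exact closure_mono Set.support_indicator_subset
    exact h1 hmem hξ3i
  have hTg : T g ξ = ∫ y, K ξ y * g y := hrep g (hf.indicator hQ3meas.compl) ξ hξts
  have hξx : dist ξ x ≤ s := hdiam ξ hξQ x hxQ
  have hfarξ : ∀ y, y ∉ Q.triple.set → s ≤ dist ξ y := hfar ξ hξQ
  have hfarU : ∀ y ∈ U, s ≤ dist ξ y := by
    intro y hy
    have h2s : 2*s < dist y x := hy
    have htri : dist y x ≤ dist y ξ + dist ξ x := dist_triangle y ξ x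
    rw [dist_comm]
    linarith
  have hfarUx : ∀ y ∈ U, s ≤ dist x y := by
    intro y hy
    have h2s : 2*s < dist y x := hy
    rw [dist_comm]
    linarith
  have hKbound : ∀ z y : Fin n → ℝ, s ≤ dist z y → ‖K z y‖ ≤ CK / s^n := by
    intro z y hzy
    have hne : z ≠ y := by
      intro he; rw [he, dist_self] at hzy; linarith
    refine le_trans (hsize z y hne) ?_
    exact div_le_div₀ hCK le_rfl (pow_pos hs0 n) (pow_le_pow_left₀ hs0.le hzy n)
  have hpiece : ∀ z : Fin n → ℝ, ∀ S : Set (Fin n → ℝ), MeasurableSet S → (∀ y ∈ S, y ≠ z) →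
      AEStronglyMeasurable (fun y => K z y * S.indicator f y) volume := by
    intro z S hSm hSne
    have hKz : AEStronglyMeasurable (fun y => K z y) (volume.restrict S) :=
      ((hKcont z).mono (fun y hy => hSne y hy)).aestronglyMeasurable hSm
    have h1 : AEStronglyMeasurable (fun y => K z y * f y) (volume.restrict S) :=
      hKz.mul (hf.1.restrict)
    have h2 : (fun y => K z y * S.indicator f y) = S.indicator (fun y => K z y * f y) := by
      funext y
      by_cases hy : y ∈ S <;> simp [indicator_of_mem, indicator_of_notMem, hy]
    rw [h2]
    exact (aestronglyMeasurable_indicator_iff hSm).2 h1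
  have hInt : ∀ z : Fin n → ℝ, ∀ S : Set (Fin n → ℝ), MeasurableSet S → (∀ y ∈ S, y ≠ z) →
      (∀ y ∈ S, ‖K z y‖ ≤ CK / s^n) → Integrable (fun y => K z y * S.indicator f y) := by
    intro z S hSm hSne hC
    refine Integrable.mono' (hf.norm.const_mul (CK / s^n)) (hpiece z S hSm hSne) ?_
    filter_upwards with y
    by_cases hy : y ∈ S
    · rw [indicator_of_mem hy, norm_mul]
      exact mul_le_mul_of_nonneg_right (hC y hy) (norm_nonneg _)
    · rw [indicator_of_notMem hy, mul_zero, norm_zero]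
      positivity
  have hne_of_far : ∀ z y : Fin n → ℝ, s ≤ dist z y → y ≠ z := by
    intro z y hzy he
    rw [he, dist_self] at hzy; linarith
  have hIg : Integrable (fun y => K ξ y * g y) := by
    rw [hg]
    exact hInt ξ _ hQ3meas.compl (fun y hy => hne_of_far ξ y (hfarξ y hy))
      (fun y hy => hKbound ξ y (hfarξ y hy))
  have hI1 : Integrable (fun y => K ξ y * g₁ y) := by
    rw [hg₁]
    exact hInt ξ U hUmeas (fun y hy => hne_of_far ξ y (hfarU y hy))
      (fun y hy => hKbound ξ y (hfarU y hy))
  have hI1x : Integrable (fun y => K x y * g₁ y) := by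
    rw [hg₁]
    exact hInt x U hUmeas (fun y hy => hne_of_far x y (hfarUx y hy))
      (fun y hy => hKbound x y (hfarUx y hy))
  have hIdiff : Integrable (fun y => (K ξ y - K x y) * g₁ y) := by
    have heq : (fun y => (K ξ y - K x y) * g₁ y) = fun y => K ξ y * g₁ y - K x y * g₁ y := by
      funext y; ring
    rw [heq]; exact hI1.sub hI1x
  have hI2 : Integrable (fun y => K ξ y * g₂ y) := by
    have heq : (fun y => K ξ y * g₂ y) = fun y => K ξ y * g y - K ξ y * g₁ y := by
      funext y; rw [hgsplit y]; ring
    rw [heq]; exact hIg.sub hI1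
  have hsplit1 : ∫ y, K ξ y * g y = (∫ y, K ξ y * g₁ y) + ∫ y, K ξ y * g₂ y := by
    rw [← integral_add hI1 hI2]
    congr 1; funext y; rw [hgsplit y]; ring
  have hsplit2 : ∫ y, K ξ y * g₁ y = (∫ y, (K ξ y - K x y) * g₁ y) + ∫ y, K x y * g₁ y := by
    rw [← integral_add hIdiff hI1x]
    congr 1; funext y; ring
  have hTstar : (‖∫ y, K x y * g₁ y‖₊ : ℝ≥0∞) ≤ maximalTruncation K f x := by
    have heq : ∫ y, K x y * g₁ y = ∫ y in U, K x y * f y := by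
      rw [← integral_indicator hUmeas]
      congr 1; funext y
      by_cases hy : y ∈ U
      · rw [hg₁, indicator_of_mem hy, indicator_of_mem hy]
      · rw [hg₁, indicator_of_notMem hy, indicator_of_notMem hy, mul_zero]
    rw [heq, maximalTruncation]
    exact le_biSup (fun ε => (‖∫ y in {y | ε < dist y x}, K x y * f y‖₊ : ℝ≥0∞))
      (mem_Ioi.2 (by positivity : (0:ℝ) < 2*s))
  have hC : (‖∫ y, K ξ y * g₂ y‖₊ : ℝ≥0∞) ≤ ENNReal.ofReal (CK * 6^n) * M := by
    have hptC : ∀ y, (‖K ξ y * g₂ y‖₊ : ℝ≥0∞) ≤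
        (Metric.closedBall x (2*s)).indicator
          (fun y => ENNReal.ofReal (CK / s^n) * (‖f y‖₊ : ℝ≥0∞)) y := by
      intro y
      by_cases hy : y ∈ Uᶜ ∩ Q.triple.setᶜ
      · have hyU : y ∉ U := hy.1
        have hy3 : y ∉ Q.triple.set := hy.2
        have hycb : y ∈ Metric.closedBall x (2*s) := by
          rw [Metric.mem_closedBall]
          have h2 : ¬ (2*s < dist y x) := hyU
          linarith [not_lt.1 h2]
        rw [indicator_of_mem hycb, hg₂, indicator_of_mem hy]
        have hKb : ‖K ξ y‖ ≤ CK / s^n := hKbound ξ y (hfarξ y hy3)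
        calc (‖K ξ y * f y‖₊ : ℝ≥0∞) = ENNReal.ofReal ‖K ξ y‖ * (‖f y‖₊ : ℝ≥0∞) := by
              rw [nnnorm_mul, ENNReal.coe_mul, ← enorm_eq_nnnorm, ofReal_norm]
        _ ≤ ENNReal.ofReal (CK / s^n) * (‖f y‖₊ : ℝ≥0∞) :=
              mul_le_mul_left (ENNReal.ofReal_le_ofReal hKb) _
      · rw [hg₂, indicator_of_notMem hy, mul_zero]
        simp
    calc (‖∫ y, K ξ y * g₂ y‖₊ : ℝ≥0∞) ≤ ∫⁻ y, (‖K ξ y * g₂ y‖₊ : ℝ≥0∞) :=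
          enorm_integral_le_lintegral_enorm _
    _ ≤ ∫⁻ y, (Metric.closedBall x (2*s)).indicator
          (fun y => ENNReal.ofReal (CK / s^n) * (‖f y‖₊ : ℝ≥0∞)) y := lintegral_mono hptC
    _ = ∫⁻ y in Metric.closedBall x (2*s), ENNReal.ofReal (CK / s^n) * (‖f y‖₊ : ℝ≥0∞) :=
          lintegral_indicator measurableSet_closedBall _
    _ ≤ ∫⁻ y in Metric.ball x (3*s), ENNReal.ofReal (CK / s^n) * (‖f y‖₊ : ℝ≥0∞) :=
          lintegral_mono_set (Metric.closedBall_subset_ball (by linarith))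
    _ = ENNReal.ofReal (CK / s^n) * ∫⁻ y in Metric.ball x (3*s), (‖f y‖₊ : ℝ≥0∞) :=
          lintegral_const_mul' _ _ ofReal_ne_top
    _ ≤ ENNReal.ofReal (CK / s^n) * (ENNReal.ofReal (2*(3*s)) ^ n * M) :=
          mul_le_mul_right (hMF (3*s) (by positivity)) _
    _ = ENNReal.ofReal (CK * 6^n) * M := by
        rw [← mul_assoc, ← ENNReal.ofReal_pow (by positivity), ← ENNReal.ofReal_mul (by positivity)]
        congr 2
        have h6 : (2*(3*s))^n = 6^n * s^n := by rw [← mul_pow]; ring_nf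
        rw [h6]
        field_simp
  have hA : (‖∫ y, (K ξ y - K x y) * g₁ y‖₊ : ℝ≥0∞) ≤ ENNReal.ofReal (8^n * (2*D)) * M := by
    set A : ℕ → Set (Fin n → ℝ) :=
      fun k => {y | 2^(k+1)*s < dist y x ∧ dist y x ≤ 2^(k+2)*s} with hAdef
    have hdc : Continuous fun y : Fin n → ℝ => dist y x := continuous_id.dist continuous_const
    have hAmeas : ∀ k, MeasurableSet (A k) := fun k =>
      (measurableSet_lt measurable_const hdc.measurable).inter
        (measurableSet_le hdc.measurable measurable_const)
    have hUsub : U ⊆ ⋃ k, A k := by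
      intro y hy
      obtain ⟨k, h1, h2⟩ := exists_annulus hs0 hy
      exact mem_iUnion.2 ⟨k, h1, h2⟩
    have hzero : (fun y => (‖(K ξ y - K x y) * g₁ y‖₊ : ℝ≥0∞)) =
        U.indicator (fun y => (‖(K ξ y - K x y) * f y‖₊ : ℝ≥0∞)) := by
      funext y
      by_cases hy : y ∈ U
      · rw [indicator_of_mem hy, hg₁, indicator_of_mem hy]
      · rw [indicator_of_notMem hy, hg₁, indicator_of_notMem hy, mul_zero, nnnorm_zero]
        simp
    have hperk : ∀ k : ℕ, ∫⁻ y in A k, (‖(K ξ y - K x y) * f y‖₊ : ℝ≥0∞) ≤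
        ENNReal.ofReal (ω ((1/2:ℝ)^(k+1)) * 8^n) * M := by
      intro k
      have h2k : (2:ℝ)*s ≤ 2^(k+1)*s := by
        have h1 : (2:ℝ) ≤ 2^(k+1) := by
          calc (2:ℝ) = 2^1 := (pow_one 2).symm
          _ ≤ 2^(k+1) := pow_le_pow_right₀ one_le_two (by omega)
        nlinarith
      have hpt : ∀ y ∈ A k, (‖(K ξ y - K x y) * f y‖₊ : ℝ≥0∞) ≤
          ENNReal.ofReal (ω ((1/2:ℝ)^(k+1)) / (2^(k+1)*s)^n) * (‖f y‖₊ : ℝ≥0∞) := by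
        intro y hy
        obtain ⟨hy1, hy2⟩ := hy
        have hd1 : 2^(k+1)*s < dist x y := by rw [dist_comm]; exact hy1
        have hdxξ : dist x ξ ≤ s := hdiam x hxQ ξ hξQ
        have hsm' := hsm x ξ y (by linarith)
        have hKd : ‖K ξ y - K x y‖ ≤ ω (dist x ξ / dist x y) / dist x y ^ n := by
          rw [norm_sub_rev]
          exact le_trans (le_add_of_nonneg_right (norm_nonneg _)) hsm'
        have hargle : dist x ξ / dist x y ≤ (1/2:ℝ)^(k+1) := by
          have ha1 : dist x ξ / dist x y ≤ s / (2^(k+1)*s) :=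
            div_le_div₀ hs0.le hdxξ (by positivity) hd1.le
          have ha2 : s / (2^(k+1)*s) = (1/2:ℝ)^(k+1) := by
            rw [div_pow, one_pow]
            field_simp
          rw [← ha2]
          exact ha1
        have hhalf1 : ((1/2:ℝ))^(k+1) ≤ 1 := pow_le_one₀ (by norm_num) (by norm_num)
        have hKd2 : ‖K ξ y - K x y‖ ≤ ω ((1/2:ℝ)^(k+1)) / (2^(k+1)*s)^n := by
          refine le_trans hKd (div_le_div₀ (hωnn k) ?_ (by positivity)
            (pow_le_pow_left₀ (by positivity) hd1.le n))
          exact hmono ⟨div_nonneg dist_nonneg dist_nonneg, le_trans hargle hhalf1⟩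
            ⟨by positivity, hhalf1⟩ hargle
        calc (‖(K ξ y - K x y) * f y‖₊ : ℝ≥0∞)
            = ENNReal.ofReal ‖K ξ y - K x y‖ * (‖f y‖₊ : ℝ≥0∞) := by
              rw [nnnorm_mul, ENNReal.coe_mul, ← enorm_eq_nnnorm, ofReal_norm]
        _ ≤ ENNReal.ofReal (ω ((1/2:ℝ)^(k+1)) / (2^(k+1)*s)^n) * (‖f y‖₊ : ℝ≥0∞) :=
              mul_le_mul_left (ENNReal.ofReal_le_ofReal hKd2) _
      calc ∫⁻ y in A k, (‖(K ξ y - K x y) * f y‖₊ : ℝ≥0∞)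
          ≤ ∫⁻ y in A k, ENNReal.ofReal (ω ((1/2:ℝ)^(k+1)) / (2^(k+1)*s)^n) * (‖f y‖₊ : ℝ≥0∞) :=
            lintegral_mono_ae (ae_restrict_of_forall_mem (hAmeas k) hpt)
      _ = ENNReal.ofReal (ω ((1/2:ℝ)^(k+1)) / (2^(k+1)*s)^n) * ∫⁻ y in A k, (‖f y‖₊ : ℝ≥0∞) :=
            lintegral_const_mul' _ _ ofReal_ne_top
      _ ≤ ENNReal.ofReal (ω ((1/2:ℝ)^(k+1)) / (2^(k+1)*s)^n) *
            ∫⁻ y in Metric.ball x (2^(k+3)*s), (‖f y‖₊ : ℝ≥0∞) := by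
            refine mul_le_mul_right (lintegral_mono_set ?_) _
            intro y hy
            have h1 : dist y x ≤ 2^(k+2)*s := hy.2
            have h2 : (2:ℝ)^(k+2)*s < 2^(k+3)*s := by
              have : (2:ℝ)^(k+2) < 2^(k+3) := by
                refine pow_lt_pow_right₀ one_lt_two (by omega)
              nlinarith
            rw [Metric.mem_ball]
            linarith
      _ ≤ ENNReal.ofReal (ω ((1/2:ℝ)^(k+1)) / (2^(k+1)*s)^n) *
            (ENNReal.ofReal (2*(2^(k+3)*s)) ^ n * M) :=
            mul_le_mul_right (hMF _ (by positivity)) _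
      _ = ENNReal.ofReal (ω ((1/2:ℝ)^(k+1)) * 8^n) * M := by
            rw [← mul_assoc, ← ENNReal.ofReal_pow (by positivity),
              ← ENNReal.ofReal_mul (div_nonneg (hωnn k) (by positivity))]
            congr 2
            have h84 : (2*(2^(k+3)*s))^n = 8^n * (2^(k+1)*s)^n := by
              rw [← mul_pow]
              congr 1
              ring
            rw [h84]
            have hX : ((2:ℝ)^(k+1)*s)^n ≠ 0 := by positivity
            field_simp
    calc (‖∫ y, (K ξ y - K x y) * g₁ y‖₊ : ℝ≥0∞)
        ≤ ∫⁻ y, (‖(K ξ y - K x y) * g₁ y‖₊ : ℝ≥0∞) := enorm_integral_le_lintegral_enorm _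
    _ = ∫⁻ y in U, (‖(K ξ y - K x y) * f y‖₊ : ℝ≥0∞) := by
        rw [hzero, lintegral_indicator hUmeas]
    _ ≤ ∫⁻ y in ⋃ k, A k, (‖(K ξ y - K x y) * f y‖₊ : ℝ≥0∞) := lintegral_mono_set hUsub
    _ ≤ ∑' k, ∫⁻ y in A k, (‖(K ξ y - K x y) * f y‖₊ : ℝ≥0∞) := lintegral_iUnion_le _ _
    _ ≤ ∑' k, ENNReal.ofReal (ω ((1/2:ℝ)^(k+1)) * 8^n) * M := ENNReal.tsum_le_tsum hperk
    _ = (∑' k, ENNReal.ofReal (ω ((1/2:ℝ)^(k+1)) * 8^n)) * M := ENNReal.tsum_mul_right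
    _ ≤ ENNReal.ofReal (8^n * (2*D)) * M := by
        refine mul_le_mul_left ?_ M
        rw [← ENNReal.ofReal_tsum_of_nonneg
          (fun k => mul_nonneg (hωnn k) (by positivity)) (hsummable.mul_right _)]
        refine ENNReal.ofReal_le_ofReal ?_
        rw [tsum_mul_right]
        have h8 : (0:ℝ) < 8^n := by positivity
        nlinarith [htsum]
  show (‖T g ξ‖₊ : ℝ≥0∞) ≤ ENNReal.ofReal (2*8^n * (D + CK)) * M + maximalTruncation K f x
  rw [hTg, hsplit1, hsplit2]
  have tri : (‖((∫ y, (K ξ y - K x y) * g₁ y) + ∫ y, K x y * g₁ y) + ∫ y, K ξ y * g₂ y‖₊ : ℝ≥0∞)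
      ≤ ((‖∫ y, (K ξ y - K x y) * g₁ y‖₊ : ℝ≥0∞) + (‖∫ y, K x y * g₁ y‖₊ : ℝ≥0∞))
        + (‖∫ y, K ξ y * g₂ y‖₊ : ℝ≥0∞) := by
    refine le_trans (ENNReal.coe_le_coe.2
      ((nnnorm_add_le _ _).trans (add_le_add_left (nnnorm_add_le _ _) _))) ?_
    push_cast
    exact le_rfl
  refine le_trans tri ?_
  have hfin : (ENNReal.ofReal (8^n * (2*D)) * M + maximalTruncation K f x)
        + ENNReal.ofReal (CK * 6^n) * M
      ≤ ENNReal.ofReal (2*8^n * (D + CK)) * M + maximalTruncation K f x := by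
    have h1 : (ENNReal.ofReal (8^n * (2*D)) * M + maximalTruncation K f x)
          + ENNReal.ofReal (CK * 6^n) * M
        = (ENNReal.ofReal (8^n * (2*D)) + ENNReal.ofReal (CK * 6^n)) * M
          + maximalTruncation K f x := by
      ring
    rw [h1, ← ENNReal.ofReal_add (by positivity) (by positivity)]
    refine add_le_add_left (mul_le_mul_left (ENNReal.ofReal_le_ofReal ?_) M) _
    have h68 : (6:ℝ)^n ≤ 8^n := pow_le_pow_left₀ (by norm_num) (by norm_num) n
    nlinarith [mul_le_mul_of_nonneg_left h68 hCK,
      mul_nonneg hCK (pow_nonneg (by norm_num : (0:ℝ) ≤ 8) n), hD0]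
  exact le_trans (add_le_add (add_le_add hA hTstar) hC) hfin
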